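/- Third-derivative cascade for I₃: let 0 < E₀ and let Ψ be three times continuously differentiable on [E₀, ∞). Define I₃(E) = 36π ∫_{E₀}^{E} ( v − √(E v) ) Ψ′(v) v^{−1/2} dv = 36π ∫_{E₀}^{E} (√v − √E) Ψ′(v) dv. Then the function z ↦ I₃(z²) is three times differentiable on (√E₀, ∞) and (2/π) (d³/dz³) I₃(z²) = −288 z² Ψ″(z²) − 144 Ψ′(z²). -/

import Mathlib

open Set Real

/-- Third-derivative cascade for `I₃`:
with `I₃(E) = 36π ∫_{E₀}^E (v − √(Ev)) Ψ′(v) v^{−1/2} dv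
            = 36π ∫_{E₀}^E (√v − √E) Ψ′(v) dv`, the function
`z ↦ I₃(z²)` is three times differentiable on `(√E₀, ∞)` and
`(2/π) d³/dz³ I₃(z²) = −288 z² Ψ″(z²) − 144 Ψ′(z²)`. -/
theorem cascade_I3 (E₀ : ℝ) (hE₀ : 0 < E₀)
    (Ψ Ψ' Ψ'' Ψ''' : ℝ → ℝ)
    (h1 : ∀ v ∈ Ici E₀, HasDerivWithinAt Ψ (Ψ' v) (Ici E₀) v)
    (h2 : ∀ v ∈ Ici E₀, HasDerivWithinAt Ψ' (Ψ'' v) (Ici E₀) v)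
    (h3 : ∀ v ∈ Ici E₀, HasDerivWithinAt Ψ'' (Ψ''' v) (Ici E₀) v)
    (hc : ContinuousOn Ψ''' (Ici E₀))
    (I₃ : ℝ → ℝ)
    (hI : ∀ e, I₃ e =
      36 * π * ∫ v in E₀..e, (v - Real.sqrt (e * v)) * Ψ' v / Real.sqrt v) :
    (∀ e ∈ Ici E₀, I₃ e = 36 * π * ∫ v in E₀..e, (Real.sqrt v - Real.sqrt e) * Ψ' v) ∧
    (∀ z ∈ Ioi (Real.sqrt E₀),
      DifferentiableAt ℝ (fun z => I₃ (z^2)) z ∧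
      DifferentiableAt ℝ (deriv (fun z => I₃ (z^2))) z ∧
      DifferentiableAt ℝ (deriv (deriv (fun z => I₃ (z^2)))) z) ∧
    (∀ z ∈ Ioi (Real.sqrt E₀),
      (2/π) * deriv (deriv (deriv (fun z => I₃ (z^2)))) z =
        -288 * z^2 * Ψ'' (z^2) - 144 * Ψ' (z^2)) := by
  have hΨc : ContinuousOn Ψ (Ici E₀) := fun v hv => (h1 v hv).continuousWithinAt
  have hΨ'c : ContinuousOn Ψ' (Ici E₀) := fun v hv => (h2 v hv).continuousWithinAt
  -- Part 1 : rewriting the integrand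
  have part1 : ∀ e ∈ Ici E₀,
      I₃ e = 36 * π * ∫ v in E₀..e, (Real.sqrt v - Real.sqrt e) * Ψ' v := by
    intro e he
    rw [hI e]
    congr 1
    apply intervalIntegral.integral_congr
    intro v hv
    rw [uIcc_of_le he] at hv
    have hv0 : 0 < v := lt_of_lt_of_le hE₀ hv.1
    have he0 : 0 ≤ e := le_trans hE₀.le he
    have hsv : Real.sqrt v ≠ 0 := ne_of_gt (Real.sqrt_pos.mpr hv0)
    have hv2 : Real.sqrt v * Real.sqrt v = v := Real.mul_self_sqrt hv0.le
    show (v - Real.sqrt (e * v)) * Ψ' v / Real.sqrt v = (Real.sqrt v - Real.sqrt e) * Ψ' v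
    rw [Real.sqrt_mul he0, div_eq_iff hsv]
    linear_combination (-Ψ' v) * hv2
  -- FTC for Ψ
  have hFTC : ∀ e, E₀ ≤ e → (∫ v in E₀..e, Ψ' v) = Ψ e - Ψ E₀ := by
    intro e he
    have hsub : Icc E₀ e ⊆ Ici E₀ := Icc_subset_Ici_self
    refine intervalIntegral.integral_eq_sub_of_hasDeriv_right_of_le he
      (hΨc.mono hsub) (fun x hx => ?_) ?_
    · exact ((h1 x (le_of_lt hx.1)).hasDerivAt (Ici_mem_nhds hx.1)).hasDerivWithinAt
    · exact (hΨ'c.mono (by rw [uIcc_of_le he]; exact hsub)).intervalIntegrable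
  -- splitting the integral
  have hsqc : ContinuousOn (fun v => Real.sqrt v * Ψ' v) (Ici E₀) :=
    (Real.continuous_sqrt.continuousOn).mul hΨ'c
  have key : ∀ e, E₀ ≤ e →
      (∫ v in E₀..e, (Real.sqrt v - Real.sqrt e) * Ψ' v)
        = (∫ v in E₀..e, Real.sqrt v * Ψ' v) - Real.sqrt e * (Ψ e - Ψ E₀) := by
    intro e he
    have hsub : uIcc E₀ e ⊆ Ici E₀ := by rw [uIcc_of_le he]; exact Icc_subset_Ici_self
    have i1 : IntervalIntegrable (fun v => Real.sqrt v * Ψ' v) MeasureTheory.volume E₀ e :=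
      (hsqc.mono hsub).intervalIntegrable
    have i2 : IntervalIntegrable (fun v => Real.sqrt e * Ψ' v) MeasureTheory.volume E₀ e :=
      (((hΨ'c.mono hsub).const_smul (Real.sqrt e))).intervalIntegrable
    have : (∫ v in E₀..e, (Real.sqrt v - Real.sqrt e) * Ψ' v)
        = ∫ v in E₀..e, (Real.sqrt v * Ψ' v - Real.sqrt e * Ψ' v) := by
      congr 1; ext v; ring
    rw [this, intervalIntegral.integral_sub i1 i2, intervalIntegral.integral_const_mul,
      hFTC e he]
  -- basic facts about z
  have hmem : ∀ z ∈ Ioi (Real.sqrt E₀), 0 < z ∧ E₀ < z ^ 2 := by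
    intro z hz
    have hz0 : 0 < z := lt_of_le_of_lt (Real.sqrt_nonneg E₀) hz
    exact ⟨hz0, (Real.sqrt_lt' hz0).mp hz⟩
  -- the closed form on Ioi √E₀
  set A : ℝ → ℝ := fun e => ∫ v in E₀..e, Real.sqrt v * Ψ' v with hA
  have hGeq : ∀ w ∈ Ioi (Real.sqrt E₀),
      I₃ (w ^ 2) = 36 * π * (A (w ^ 2) - w * (Ψ (w ^ 2) - Ψ E₀)) := by
    intro w hw
    obtain ⟨hw0, hw2⟩ := hmem w hw
    rw [part1 _ (le_of_lt hw2), key _ (le_of_lt hw2), Real.sqrt_sq hw0.le]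
  -- derivative of A
  have hAderiv : ∀ e, E₀ < e → HasDerivAt A (Real.sqrt e * Ψ' e) e := by
    intro e he
    have hsub : uIcc E₀ e ⊆ Ici E₀ := by
      rw [uIcc_of_le he.le]; exact Icc_subset_Ici_self
    refine intervalIntegral.integral_hasDerivAt_right
      ((hsqc.mono hsub).intervalIntegrable)
      (ContinuousOn.stronglyMeasurableAtFilter isOpen_Ioi (hsqc.mono Ioi_subset_Ici_self) e he)
      ?_
    exact (hsqc e he.le).continuousAt (Ici_mem_nhds he)
  -- first derivative
  have hG1 : ∀ z ∈ Ioi (Real.sqrt E₀),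
      HasDerivAt (fun z => I₃ (z ^ 2)) (36 * π * (Ψ E₀ - Ψ (z ^ 2))) z := by
    intro z hz
    obtain ⟨hz0, hz2⟩ := hmem z hz
    have hsq : HasDerivAt (fun z : ℝ => z ^ 2) (2 * z) z := by
      simpa using hasDerivAt_pow 2 z
    have hΨz : HasDerivAt Ψ (Ψ' (z ^ 2)) (z ^ 2) :=
      (h1 _ hz2.le).hasDerivAt (Ici_mem_nhds hz2)
    have hAz : HasDerivAt A (Real.sqrt (z ^ 2) * Ψ' (z ^ 2)) (z ^ 2) := hAderiv _ hz2
    rw [Real.sqrt_sq hz0.le] at hAz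
    have hc1 : HasDerivAt (fun w : ℝ => A (w ^ 2)) (z * Ψ' (z ^ 2) * (2 * z)) z := by
      have := HasDerivAt.comp (h₂ := A) (h := fun w : ℝ => w ^ 2) z hAz hsq
      exact this
    have hc2 : HasDerivAt (fun w : ℝ => Ψ (w ^ 2)) (Ψ' (z ^ 2) * (2 * z)) z := by
      have := HasDerivAt.comp (h₂ := Ψ) (h := fun w : ℝ => w ^ 2) z hΨz hsq
      exact this
    have hH : HasDerivAt (fun w => 36 * π * (A (w ^ 2) - w * (Ψ (w ^ 2) - Ψ E₀)))
        (36 * π * ((z * Ψ' (z ^ 2)) * (2 * z) -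
          (1 * (Ψ (z ^ 2) - Ψ E₀) + z * (Ψ' (z ^ 2) * (2 * z))))) z :=
      (hc1.sub ((hasDerivAt_id z).mul (hc2.sub_const (Ψ E₀)))).const_mul (36 * π)
    have heq : (fun z => I₃ (z ^ 2)) =ᶠ[nhds z]
        (fun w => 36 * π * (A (w ^ 2) - w * (Ψ (w ^ 2) - Ψ E₀))) :=
      Filter.eventuallyEq_of_mem (isOpen_Ioi.mem_nhds hz) hGeq
    have := hH.congr_of_eventuallyEq heq
    exact this.congr_deriv (by ring)
  have hd1 : EqOn (deriv (fun z => I₃ (z ^ 2)))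
      (fun z => 36 * π * (Ψ E₀ - Ψ (z ^ 2))) (Ioi (Real.sqrt E₀)) :=
    fun z hz => (hG1 z hz).deriv
  -- second derivative
  have hG2 : ∀ z ∈ Ioi (Real.sqrt E₀),
      HasDerivAt (deriv (fun z => I₃ (z ^ 2))) (-72 * π * (z * Ψ' (z ^ 2))) z := by
    intro z hz
    obtain ⟨hz0, hz2⟩ := hmem z hz
    have hsq : HasDerivAt (fun z : ℝ => z ^ 2) (2 * z) z := by
      simpa using hasDerivAt_pow 2 z
    have hΨz : HasDerivAt Ψ (Ψ' (z ^ 2)) (z ^ 2) :=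
      (h1 _ hz2.le).hasDerivAt (Ici_mem_nhds hz2)
    have hc2 : HasDerivAt (fun w : ℝ => Ψ (w ^ 2)) (Ψ' (z ^ 2) * (2 * z)) z := by
      have := HasDerivAt.comp (h₂ := Ψ) (h := fun w : ℝ => w ^ 2) z hΨz hsq
      exact this
    have hH : HasDerivAt (fun z => 36 * π * (Ψ E₀ - Ψ (z ^ 2)))
        (36 * π * (-(Ψ' (z ^ 2) * (2 * z)))) z :=
      (hc2.const_sub (Ψ E₀)).const_mul (36 * π)
    have heq : deriv (fun z => I₃ (z ^ 2)) =ᶠ[nhds z]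
        (fun z => 36 * π * (Ψ E₀ - Ψ (z ^ 2))) :=
      Filter.eventuallyEq_of_mem (isOpen_Ioi.mem_nhds hz) hd1
    have := hH.congr_of_eventuallyEq heq
    exact this.congr_deriv (by ring)
  have hd2 : EqOn (deriv (deriv (fun z => I₃ (z ^ 2))))
      (fun z => -72 * π * (z * Ψ' (z ^ 2))) (Ioi (Real.sqrt E₀)) :=
    fun z hz => (hG2 z hz).deriv
  -- third derivative
  have hG3 : ∀ z ∈ Ioi (Real.sqrt E₀),
      HasDerivAt (deriv (deriv (fun z => I₃ (z ^ 2))))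
        (-144 * π * z ^ 2 * Ψ'' (z ^ 2) - 72 * π * Ψ' (z ^ 2)) z := by
    intro z hz
    obtain ⟨hz0, hz2⟩ := hmem z hz
    have hsq : HasDerivAt (fun z : ℝ => z ^ 2) (2 * z) z := by
      simpa using hasDerivAt_pow 2 z
    have hΨ'z : HasDerivAt Ψ' (Ψ'' (z ^ 2)) (z ^ 2) :=
      (h2 _ hz2.le).hasDerivAt (Ici_mem_nhds hz2)
    have hc2 : HasDerivAt (fun w : ℝ => Ψ' (w ^ 2)) (Ψ'' (z ^ 2) * (2 * z)) z := by
      have := HasDerivAt.comp (h₂ := Ψ') (h := fun w : ℝ => w ^ 2) z hΨ'z hsq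
      exact this
    have hH : HasDerivAt (fun z => -72 * π * (z * Ψ' (z ^ 2)))
        (-72 * π * (1 * Ψ' (z ^ 2) + z * (Ψ'' (z ^ 2) * (2 * z)))) z :=
      ((hasDerivAt_id z).mul hc2).const_mul (-72 * π)
    have heq : deriv (deriv (fun z => I₃ (z ^ 2))) =ᶠ[nhds z]
        (fun z => -72 * π * (z * Ψ' (z ^ 2))) :=
      Filter.eventuallyEq_of_mem (isOpen_Ioi.mem_nhds hz) hd2
    have := hH.congr_of_eventuallyEq heq
    exact this.congr_deriv (by ring)
  refine ⟨part1, fun z hz => ⟨(hG1 z hz).differentiableAt,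
    (hG2 z hz).differentiableAt, (hG3 z hz).differentiableAt⟩, fun z hz => ?_⟩
  rw [(hG3 z hz).deriv]
  have hπ : π ≠ 0 := Real.pi_ne_zero
  field_simp
  ring
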